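/- Let X be a complex Banach space of dimension ≥ 2 and S a non-commutative semigroup of bounded operators with rank[S,T] ≤ 1 for all S,T ∈ S, and let [A,B] = y ⊗ φ with y, φ nonzero for some A,B ∈ S. Then the closed linear span M of {Sy : S ∈ S} ∪ {y} is a nonzero closed S-invariant subspace contained in ker φ; in particular M ≠ X. -/

import Mathlib

namespace RankOneComm

variable {X : Type*} [NormedAddCommGroup X] [NormedSpace ℂ X]

lemma msr (T : X →L[ℂ] X) (f : X →L[ℂ] ℂ) (v : X) :
    T * (f.smulRight v) = f.smulRight (T v) := by
  ext x; simp [ContinuousLinearMap.mul_apply]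

lemma srm (f : X →L[ℂ] ℂ) (v : X) (T : X →L[ℂ] X) :
    (f.smulRight v) * T = (f.comp T).smulRight v := by
  ext x; simp [ContinuousLinearMap.mul_apply]

lemma sr_add_left (f g : X →L[ℂ] ℂ) (v : X) :
    (f + g).smulRight v = f.smulRight v + g.smulRight v := by
  ext x; simp [add_smul]

lemma sr_add_right (f : X →L[ℂ] ℂ) (v w : X) :
    f.smulRight (v + w) = f.smulRight v + f.smulRight w := by
  ext x; simp [smul_add]

lemma sr_smul_left (k : ℂ) (f : X →L[ℂ] ℂ) (v : X) :
    (k • f).smulRight v = f.smulRight (k • v) := by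
  ext x
  simp [smul_smul, mul_comm]

lemma exists_rep (G : X →L[ℂ] X) (h : LinearMap.rank (G : X →ₗ[ℂ] X) ≤ 1) :
    ∃ (f : X →L[ℂ] ℂ) (v : X), G = f.smulRight v := by
  rw [LinearMap.rank] at h
  obtain ⟨v₀, hv₀⟩ := rank_le_one_iff.mp h
  set v : X := (v₀ : X) with hv
  by_cases hvz : v = 0
  · refine ⟨0, 0, ?_⟩
    ext x
    obtain ⟨r, hr⟩ := hv₀ ⟨G x, LinearMap.mem_range_self _ x⟩
    have : r • v = G x := congrArg Subtype.val hr
    simp [← this, hvz]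
  · obtain ⟨h', hh1, hhv⟩ := exists_dual_vector ℂ v (norm_ne_zero_iff.mpr hvz)
    refine ⟨(h' v)⁻¹ • (h'.comp G), v, ?_⟩
    have hv0 : h' v ≠ 0 := by
      rw [hhv]
      simpa using norm_ne_zero_iff.mpr hvz
    ext x
    obtain ⟨r, hr⟩ := hv₀ ⟨G x, LinearMap.mem_range_self _ x⟩
    have hG : r • v = G x := congrArg Subtype.val hr
    have : h' (G x) = r * h' v := by rw [← hG, map_smul, smul_eq_mul]
    simp only [ContinuousLinearMap.smulRight_apply, ContinuousLinearMap.smul_apply,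
      ContinuousLinearMap.comp_apply, this, smul_eq_mul]
    rw [← hG]
    field_simp

lemma ind2 {v₁ v₂ : X} (h₁ : v₁ ≠ 0) (h₂ : ¬ ∃ k : ℂ, v₂ = k • v₁) {a b : ℂ}
    (h : a • v₁ + b • v₂ = 0) : a = 0 ∧ b = 0 := by
  by_cases hb : b = 0
  · refine ⟨?_, hb⟩
    rw [hb, zero_smul, add_zero, smul_eq_zero] at h
    exact h.resolve_right h₁
  · refine absurd ⟨-a/b, ?_⟩ h₂
    apply smul_right_injective X hb
    show b • v₂ = b • ((-a/b) • v₁)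
    have hba : b • ((-a/b) • v₁) = (-a) • v₁ := by
      rw [smul_smul]
      congr 1
      field_simp
    rw [hba]
    linear_combination (norm := module) h

lemma tr2 {v₁ v₂ : X} {f₁ f₂ : X →L[ℂ] ℂ} (h : ∀ x, f₁ x • v₁ + f₂ x • v₂ = 0) :
    f₁ v₁ + f₂ v₂ = 0 := by
  by_cases hv : v₁ = 0
  · subst hv
    have h2 : ∀ x, f₂ x • v₂ = 0 := fun x => by simpa using h x
    rcases smul_eq_zero.mp (h2 v₂) with h' | h' <;> simp [h']
  · by_cases hk : ∃ k : ℂ, v₂ = k • v₁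
    · obtain ⟨k, rfl⟩ := hk
      have h3 : ∀ x, f₁ x + k * f₂ x = 0 := fun x => by
        have h2 : (f₁ x + k * f₂ x) • v₁ = 0 := by
          linear_combination (norm := module) h x
        rcases smul_eq_zero.mp h2 with h' | h'
        · exact h'
        · exact absurd h' hv
      have := h3 v₁
      rw [map_smul, smul_eq_mul]
      linear_combination this
    · have hz := fun x => ind2 hv hk (h x)
      rw [(hz v₁).1, (hz v₂).2, add_zero]

lemma tr3 {v₁ v₂ v₃ : X} {f₁ f₂ f₃ : X →L[ℂ] ℂ}
    (h : f₁.smulRight v₁ + f₂.smulRight v₂ = f₃.smulRight v₃) :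
    f₁ v₁ + f₂ v₂ = f₃ v₃ := by
  have hx : ∀ x, f₁ x • v₁ + f₂ x • v₂ = f₃ x • v₃ := fun x => by
    have := congrArg (fun (T : X →L[ℂ] X) => T x) h
    simpa using this
  by_cases h3 : ∃ a b : ℂ, v₃ = a • v₁ + b • v₂
  · obtain ⟨a, b, hab⟩ := h3
    have h2 : ∀ x, (f₁ - a • f₃) x • v₁ + (f₂ - b • f₃) x • v₂ = 0 := fun x => by
      simp only [ContinuousLinearMap.sub_apply, ContinuousLinearMap.smul_apply, smul_eq_mul]
      have hh := hx x
      rw [hab] at hh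
      linear_combination (norm := module) hh
    have ht := tr2 h2
    simp only [ContinuousLinearMap.sub_apply, ContinuousLinearMap.smul_apply, smul_eq_mul] at ht
    have h4 : f₃ v₃ = a * f₃ v₁ + b * f₃ v₂ := by
      rw [hab]; simp [smul_eq_mul]
    linear_combination ht - h4
  · have hf₃ : ∀ x, f₃ x = (0 : ℂ) := by
      intro x
      by_contra hne
      apply h3
      refine ⟨f₁ x / f₃ x, f₂ x / f₃ x, ?_⟩
      apply smul_right_injective X hne
      show f₃ x • v₃ = f₃ x • ((f₁ x / f₃ x) • v₁ + (f₂ x / f₃ x) • v₂)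
      have e1 : f₃ x • ((f₁ x / f₃ x) • v₁ + (f₂ x / f₃ x) • v₂) = f₁ x • v₁ + f₂ x • v₂ := by
        rw [smul_add, smul_smul, smul_smul]
        congr 1 <;> congr 1 <;> field_simp
      rw [e1, ← hx x]
    have h2 : ∀ x, f₁ x • v₁ + f₂ x • v₂ = 0 := fun x => by
      rw [hx x, hf₃ x, zero_smul]
    rw [hf₃ v₃]
    exact tr2 h2

lemma dich {G : X →L[ℂ] X} {v₁ v₂ : X} {f₁ f₂ : X →L[ℂ] ℂ}
    (hr : LinearMap.rank (G : X →ₗ[ℂ] X) ≤ 1)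
    (hG : G = f₁.smulRight v₁ + f₂.smulRight v₂)
    (hv₁ : v₁ ≠ 0) (hf₂ : f₂ ≠ 0) :
    (∃ k : ℂ, v₂ = k • v₁) ∨ (∃ k : ℂ, f₁ = k • f₂) := by
  by_cases hdep : ∃ k : ℂ, v₂ = k • v₁
  · exact Or.inl hdep
  right
  obtain ⟨f, v, hfv⟩ := exists_rep G hr
  have hx : ∀ x, f₁ x • v₁ + f₂ x • v₂ = f x • v := fun x => by
    have := congrArg (fun (T : X →L[ℂ] X) => T x) (hG.symm.trans hfv)
    simpa using this
  obtain ⟨x₀, hx₀⟩ : ∃ x₀, f₂ x₀ ≠ 0 := by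
    by_contra hcon
    push_neg at hcon
    exact hf₂ (ContinuousLinearMap.ext fun x => by simpa using hcon x)
  have hfx₀ : f x₀ ≠ 0 := by
    intro h0
    have h1 := hx x₀
    rw [h0, zero_smul] at h1
    exact hx₀ (ind2 hv₁ hdep h1).2
  have co : ∀ x, f x₀ * f₁ x - f x * f₁ x₀ = 0 ∧ f x₀ * f₂ x - f x * f₂ x₀ = 0 := by
    intro x
    have h1 : (f x₀ * f₁ x - f x * f₁ x₀) • v₁ + (f x₀ * f₂ x - f x * f₂ x₀) • v₂ = 0 := by
      have ha := hx x
      have hb := hx x₀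
      have hc : f x₀ • (f₁ x • v₁ + f₂ x • v₂) = f x • (f₁ x₀ • v₁ + f₂ x₀ • v₂) := by
        rw [ha, hb, smul_smul, smul_smul, mul_comm]
      linear_combination (norm := module) hc
    exact ind2 hv₁ hdep h1
  refine ⟨f₁ x₀ / f₂ x₀, ?_⟩
  ext x
  have h1 := (co x).1
  have h2 := (co x).2
  simp only [ContinuousLinearMap.smul_apply, smul_eq_mul]
  field_simp
  -- goal : f₁ x * f₂ x₀ = f₁ x₀ * f₂ x
  have e1 : f x₀ * f₁ x = f x * f₁ x₀ := by linear_combination h1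
  have e2 : f x₀ * f₂ x = f x * f₂ x₀ := by linear_combination h2
  have e3 : f x₀ * (f₁ x * f₂ x₀) = f x₀ * (f₁ x₀ * f₂ x) := by
    calc f x₀ * (f₁ x * f₂ x₀) = (f x₀ * f₁ x) * f₂ x₀ := by ring
    _ = (f x * f₁ x₀) * f₂ x₀ := by rw [e1]
    _ = f₁ x₀ * (f x * f₂ x₀) := by ring
    _ = f₁ x₀ * (f x₀ * f₂ x) := by rw [← e2]
    _ = f x₀ * (f₁ x₀ * f₂ x) := by ring
  exact mul_left_cancel₀ hfx₀ e3


lemma trace_core {P Q : X →L[ℂ] X} {ψ : X →L[ℂ] ℂ} {w : X}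
    (hrep : P*Q - Q*P = ψ.smulRight w)
    (h1 : LinearMap.rank ((P*(Q*Q) - (Q*Q)*P : X →L[ℂ] X) : X →ₗ[ℂ] X) ≤ 1)
    (h2 : LinearMap.rank (((P*P)*Q - Q*(P*P) : X →L[ℂ] X) : X →ₗ[ℂ] X) ≤ 1)
    (h3 : LinearMap.rank (((P*P)*(Q*Q) - (Q*Q)*(P*P) : X →L[ℂ] X) : X →ₗ[ℂ] X) ≤ 1) :
    ψ w = 0 := by
  by_contra hc
  have hw : w ≠ 0 := fun h => hc (by rw [h, map_zero])
  have hψ : ψ ≠ 0 := fun h => hc (by rw [h]; simp)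
  have hGw : P (Q w) - Q (P w) = ψ w • w := by
    have := congrArg (fun (T : X →L[ℂ] X) => T w) hrep
    simpa using this
  have d1op : P*(Q*Q) - (Q*Q)*P = (ψ.comp Q).smulRight w + ψ.smulRight (Q w) := by
    have e : P*(Q*Q) - (Q*Q)*P = (P*Q - Q*P)*Q + Q*(P*Q - Q*P) := by noncomm_ring
    rw [e, hrep, srm, msr]
  have d2op : (P*P)*Q - Q*(P*P) = (ψ.comp P).smulRight w + ψ.smulRight (P w) := by
    have e : (P*P)*Q - Q*(P*P) = P*(P*Q - Q*P) + (P*Q - Q*P)*P := by noncomm_ring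
    rw [e, hrep, srm, msr, add_comm]
  have d1 := dich h1 d1op hw hψ
  have d2 := dich h2 d2op hw hψ
  have case1 : ∀ (α β : ℂ), P w = α • w → Q w = β • w → False := by
    intro α β hα hβ
    apply hc
    have h0 : P (Q w) - Q (P w) = 0 := by
      rw [hβ, hα, map_smul, map_smul, hα, hβ]
      module
    rw [h0] at hGw
    rcases smul_eq_zero.mp hGw.symm with h' | h'
    · exact h'
    · exact absurd h' hw
  have case2 : ∀ (μ ν : ℂ), ψ.comp Q = μ • ψ → ψ.comp P = ν • ψ → False := by
    intro μ ν hμ hν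
    have hψQ : ∀ z, ψ (Q z) = μ * ψ z := fun z => by
      have := congrArg (fun (F : X →L[ℂ] ℂ) => F z) hμ; simpa using this
    have hψP : ∀ z, ψ (P z) = ν * ψ z := fun z => by
      have := congrArg (fun (F : X →L[ℂ] ℂ) => F z) hν; simpa using this
    have hz : ∀ x, ψ w * ψ x = 0 := by
      intro x
      have hpt : P (Q x) - Q (P x) = ψ x • w := by
        have := congrArg (fun (T : X →L[ℂ] X) => T x) hrep
        simpa using this
      have h5 := congrArg ψ hpt
      rw [map_sub, hψP, hψQ, hψQ, hψP, map_smul, smul_eq_mul] at h5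
      linear_combination -h5
    obtain ⟨x₁, hx₁⟩ : ∃ x₁, ψ x₁ ≠ 0 := by
      by_contra hcon
      push_neg at hcon
      exact hψ (ContinuousLinearMap.ext fun x => by simpa using hcon x)
    exact hc ((mul_eq_zero.mp (hz x₁)).resolve_right hx₁)
  have case3 : ∀ (α μ : ℂ), P w = α • w → ψ.comp Q = μ • ψ →
      (¬ ∃ β : ℂ, Q w = β • w) → (¬ ∃ ν : ℂ, ψ.comp P = ν • ψ) → False := by
    intro α μ hα hμ hnβ hnν
    have hop : (P*P)*(Q*Q) - (Q*Q)*(P*P)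
        = (ψ.comp P).smulRight (μ • w + Q w) + ψ.smulRight (P (μ • w + Q w)) := by
      have e : (P*P)*(Q*Q) - (Q*Q)*(P*P)
          = P*(P*(Q*Q) - (Q*Q)*P) + (P*(Q*Q) - (Q*Q)*P)*P := by noncomm_ring
      rw [e, d1op, hμ, sr_smul_left, ← sr_add_right, msr, srm, add_comm]
    have hv1 : μ • w + Q w ≠ 0 := by
      intro h0
      exact hnβ ⟨-μ, by linear_combination (norm := module) h0⟩
    rcases dich h3 hop hv1 hψ with ⟨σ, hσ⟩ | ⟨ν, hν⟩
    · have hPQw : P (Q w) = ψ w • w + α • Q w := by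
        have h6 := hGw
        rw [hα, map_smul] at h6
        linear_combination (norm := module) h6
      have hL : P (μ • w + Q w) = (μ*α + ψ w) • w + α • Q w := by
        rw [map_add, map_smul, hα, smul_smul, hPQw]
        module
      rw [hL] at hσ
      have heq : (μ*α + ψ w - σ*μ) • w + (α - σ) • Q w = 0 := by
        linear_combination (norm := module) hσ
      obtain ⟨e1, e2⟩ := ind2 hw hnβ heq
      apply hc
      have hσα : σ = α := by linear_combination -e2
      rw [hσα] at e1
      linear_combination e1
    · exact hnν ⟨ν, hν⟩
  have case4 : ∀ (β ν : ℂ), Q w = β • w → ψ.comp P = ν • ψ →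
      (¬ ∃ α : ℂ, P w = α • w) → (¬ ∃ μ : ℂ, ψ.comp Q = μ • ψ) → False := by
    intro β ν hβ hν hnα hnμ
    have hop : (P*P)*(Q*Q) - (Q*Q)*(P*P)
        = (ψ.comp Q).smulRight (ν • w + P w) + ψ.smulRight (Q (ν • w + P w)) := by
      have e : (P*P)*(Q*Q) - (Q*Q)*(P*P)
          = ((P*P)*Q - Q*(P*P))*Q + Q*((P*P)*Q - Q*(P*P)) := by noncomm_ring
      rw [e, d2op, hν, sr_smul_left, ← sr_add_right, srm, msr, add_comm]
    have hv1 : ν • w + P w ≠ 0 := by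
      intro h0
      exact hnα ⟨-ν, by linear_combination (norm := module) h0⟩
    rcases dich h3 hop hv1 hψ with ⟨σ, hσ⟩ | ⟨μ, hμ⟩
    · have hQPw : Q (P w) = β • P w - ψ w • w := by
        have h6 := hGw
        rw [hβ, map_smul] at h6
        linear_combination (norm := module) h6.symm
      have hL : Q (ν • w + P w) = β • P w + (ν*β - ψ w) • w := by
        rw [map_add, map_smul, hβ, smul_smul, hQPw]
        module
      rw [hL] at hσ
      have heq : (ν*β - ψ w - σ*ν) • w + (β - σ) • P w = 0 := by
        linear_combination (norm := module) hσ
      obtain ⟨e1, e2⟩ := ind2 hw hnα heq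
      apply hc
      have hσβ : σ = β := by linear_combination -e2
      rw [hσβ] at e1
      linear_combination -e1
    · exact hnμ ⟨μ, hμ⟩
  rcases d1 with ⟨β, hβ⟩ | ⟨μ, hμ⟩ <;> rcases d2 with ⟨α, hα⟩ | ⟨ν, hν⟩
  · exact case1 α β hα hβ
  · by_cases hα : ∃ α : ℂ, P w = α • w
    · obtain ⟨α, hα⟩ := hα; exact case1 α β hα hβ
    · by_cases hμ : ∃ μ : ℂ, ψ.comp Q = μ • ψ
      · obtain ⟨μ, hμ⟩ := hμ; exact case2 μ ν hμ hν
      · exact case4 β ν hβ hν hα hμ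
  · by_cases hβ : ∃ β : ℂ, Q w = β • w
    · obtain ⟨β, hβ⟩ := hβ; exact case1 α β hα hβ
    · by_cases hν : ∃ ν : ℂ, ψ.comp P = ν • ψ
      · obtain ⟨ν, hν⟩ := hν; exact case2 μ ν hμ hν
      · exact case3 α μ hα hμ hβ hν
  · exact case2 μ ν hμ hν

lemma trace_zero (𝒮 : Set (X →L[ℂ] X))
    (hmul : ∀ S ∈ 𝒮, ∀ T ∈ 𝒮, S * T ∈ 𝒮)
    (hrank : ∀ S ∈ 𝒮, ∀ T ∈ 𝒮, LinearMap.rank ((S * T - T * S : X →L[ℂ] X) : X →ₗ[ℂ] X) ≤ 1)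
    {P Q : X →L[ℂ] X} {ψ : X →L[ℂ] ℂ} {w : X}
    (hP : P ∈ 𝒮) (hQ : Q ∈ 𝒮) (hrep : P*Q - Q*P = ψ.smulRight w) : ψ w = 0 :=
  trace_core hrep (hrank _ hP _ (hmul _ hQ _ hQ)) (hrank _ (hmul _ hP _ hP) _ hQ)
    (hrank _ (hmul _ hP _ hP) _ (hmul _ hQ _ hQ))

lemma sr_neg_left (f : X →L[ℂ] ℂ) (v : X) :
    (-f).smulRight v = -(f.smulRight v) := by
  ext x; simp

set_option maxHeartbeats 2000000 in
lemma caseC (𝒮 : Set (X →L[ℂ] X))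
    (hmul : ∀ S ∈ 𝒮, ∀ T ∈ 𝒮, S * T ∈ 𝒮)
    (hrank : ∀ S ∈ 𝒮, ∀ T ∈ 𝒮, LinearMap.rank ((S * T - T * S : X →L[ℂ] X) : X →ₗ[ℂ] X) ≤ 1)
    {A B S : X →L[ℂ] X} {y u p : X} {φ g q : X →L[ℂ] ℂ}
    (hA : A ∈ 𝒮) (hB : B ∈ 𝒮) (hS : S ∈ 𝒮)
    (hF : A*B - B*A = φ.smulRight y)
    (hM : A*S - S*A = g.smulRight u)
    (hN : S*B - B*S = q.smulRight p)
    (hc : φ (S y) ≠ 0)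
    (hκe : ∃ κ : ℂ, S y = κ • u)
    (hρe : ∃ ρ : ℂ, q.comp A = ρ • φ) : False := by
  have h0 : φ y = 0 := trace_zero 𝒮 hmul hrank hA hB hF
  have hgu : g u = 0 := trace_zero 𝒮 hmul hrank hA hS hM
  have hqp : q p = 0 := trace_zero 𝒮 hmul hrank hS hB hN
  have idBS : A*(B*S) - (B*S)*A = (φ.comp S).smulRight y + g.smulRight (B u) := by
    have e : A*(B*S) - (B*S)*A = (A*B - B*A)*S + B*(A*S - S*A) := by noncomm_ring
    rw [e, hF, hM, srm, msr]
  have hgBu : g (B u) = -(φ (S y)) := by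
    obtain ⟨ψ₁, w₁, hw₁⟩ := exists_rep _ (hrank A hA (B*S) (hmul B hB S hS))
    have t1 : ψ₁ w₁ = 0 := trace_zero 𝒮 hmul hrank hA (hmul B hB S hS) hw₁
    have t2 := tr3 (idBS.symm.trans hw₁)
    rw [t1] at t2
    simp only [ContinuousLinearMap.comp_apply] at t2
    linear_combination t2
  have idSA : (S*A)*B - B*(S*A) = (q.comp A).smulRight p + φ.smulRight (S y) := by
    have e : (S*A)*B - B*(S*A) = S*(A*B - B*A) + (S*B - B*S)*A := by noncomm_ring
    rw [e, hF, hN, msr, srm, add_comm]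
  have hqAp : q (A p) = -(φ (S y)) := by
    obtain ⟨ψ₁, w₁, hw₁⟩ := exists_rep _ (hrank (S*A) (hmul S hS A hA) B hB)
    have t1 : ψ₁ w₁ = 0 := trace_zero 𝒮 hmul hrank (hmul S hS A hA) hB hw₁
    have t2 := tr3 (idSA.symm.trans hw₁)
    rw [t1] at t2
    simp only [ContinuousLinearMap.comp_apply] at t2
    linear_combination t2
  have hy0 : y ≠ 0 := by
    intro h; apply hc; rw [h, map_zero, map_zero]
  have hSy0 : S y ≠ 0 := by
    intro h; apply hc; rw [h, map_zero]
  have hφ0 : φ ≠ 0 := by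
    intro h; apply hc; rw [h]; simp
  have hu0 : u ≠ 0 := by
    intro h; apply hc
    have h2 := hgBu; rw [h, map_zero, map_zero] at h2
    linear_combination h2
  have hg0 : g ≠ 0 := by
    intro h; apply hc
    have h2 := hgBu; rw [h] at h2
    simp only [ContinuousLinearMap.zero_apply] at h2
    linear_combination h2
  have hp0 : p ≠ 0 := by
    intro h; apply hc
    have h2 := hqAp; rw [h, map_zero, map_zero] at h2
    linear_combination h2
  have hq0 : q ≠ 0 := by
    intro h; apply hc
    have h2 := hqAp; rw [h] at h2
    simp only [ContinuousLinearMap.zero_apply] at h2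
    linear_combination h2
  have hBu0 : B u ≠ 0 := by
    intro h; apply hc
    have h2 := hgBu; rw [h, map_zero] at h2
    linear_combination h2
  have hAp0 : A p ≠ 0 := by
    intro h; apply hc
    have h2 := hqAp; rw [h, map_zero] at h2
    linear_combination h2
  have hns : ¬ ∃ k : ℂ, S y = k • y := by
    rintro ⟨k, hk⟩; apply hc; rw [hk, map_smul, h0, smul_zero]
  -- Jacobi identity
  have hXIop : q.smulRight (A p) - (q.comp A).smulRight p + (g.smulRight (B u) - (g.comp B).smulRight u)
      = φ.smulRight (S y) - (φ.comp S).smulRight y := by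
    have e : A*(q.smulRight p) - (q.smulRight p)*A + (B*(g.smulRight u) - (g.smulRight u)*B)
        = S*(φ.smulRight y) - (φ.smulRight y)*S := by
      rw [← hF, ← hM, ← hN]; noncomm_ring
    rw [msr, srm, msr, srm, msr, srm] at e
    exact e
  have hXI : ∀ x : X, q x • A p - q (A x) • p + (g x • B u - g (B x) • u)
      = φ x • S y - φ (S x) • y := fun x => by
    have h2 := congrArg (fun T : X →L[ℂ] X => T x) hXIop
    simpa using h2
  obtain ⟨κ, hκ⟩ := hκe
  have hκ0 : κ ≠ 0 := by rintro rfl; rw [zero_smul] at hκ; exact hSy0 hκ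
  obtain ⟨ρ, hρ⟩ := hρe
  have hqA : ∀ x, q (A x) = ρ * φ x := fun x => by
    have h2 := congrArg (fun F : X →L[ℂ] ℂ => F x) hρ
    simpa using h2
  have hρφp : ρ * φ p = -(φ (S y)) := by rw [← hqA p]; exact hqAp
  have hρ0 : ρ ≠ 0 := by
    intro h; rw [h, zero_mul] at hρφp; exact hc (by linear_combination hρφp)
  have hφu : κ * φ u = φ (S y) := by
    conv_rhs => rw [hκ]
    rw [map_smul, smul_eq_mul]
  have hu_eq : u = κ⁻¹ • S y := by rw [hκ, smul_smul, inv_mul_cancel₀ hκ0, one_smul]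
  have hgSy : g (S y) = 0 := by rw [hκ, map_smul, hgu, smul_zero]
  have hqAy : q (A y) = 0 := by rw [hqA, h0, mul_zero]
  -- dichotomies (viii) and (x)
  have idAS : (A*S)*B - B*(A*S) = (φ.comp S).smulRight y + q.smulRight (A p) := by
    have e : (A*S)*B - B*(A*S) = A*(S*B - B*S) + (A*B - B*A)*S := by noncomm_ring
    rw [e, hN, hF, msr, srm, add_comm]
  have d8 := dich (hrank A hA (B*S) (hmul B hB S hS)) idBS hy0 hg0
  have d10 := dich (hrank (A*S) (hmul A hA S hS) B hB) idAS hy0 hq0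
  rcases d8 with ⟨η, hη⟩ | ⟨μ, hμ⟩ <;> rcases d10 with ⟨ζ, hζ⟩ | ⟨ν, hν⟩
  -- Case C-a : B u = η • y, A p = ζ • y
  · have hζq : ζ * q y = -(φ (S y)) := by
      rw [← hqAp, hζ, map_smul, smul_eq_mul]
    have hηg : η * g y = -(φ (S y)) := by
      rw [← hgBu, hη, map_smul, smul_eq_mul]
    have hXIy := hXI y
    rw [hζ, hη, hqAy, h0, hu_eq] at hXIy
    have ev : (ζ * q y + η * g y + φ (S y)) • y + (-(g (B y) * κ⁻¹)) • S y = 0 := by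
      linear_combination (norm := module) hXIy
    obtain ⟨e1, _⟩ := ind2 hy0 hns ev
    exact hc (by linear_combination hζq + hηg - e1)
  -- Case C-b : B u = η • y, φ.comp S = ν • q  (the hard case)
  · have hη0 : η ≠ 0 := by rintro rfl; rw [zero_smul] at hη; exact hBu0 hη
    have hνq : ∀ x, φ (S x) = ν * q x := fun x => by
      have h2 := congrArg (fun F : X →L[ℂ] ℂ => F x) hν
      simpa using h2
    have hν0 : ν ≠ 0 := by
      intro h; apply hc; rw [hνq y, h, zero_mul]
    have hqy0 : q y ≠ 0 := by
      intro h; apply hc; rw [hνq y, h, mul_zero]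
    have hηg : η * g y = -(φ (S y)) := by
      rw [← hgBu, hη, map_smul, smul_eq_mul]
    -- Step 1 : A p = b • S y
    have hXIy := hXI y
    rw [hqAy, h0, hη, hu_eq] at hXIy
    have ev1 : q y • A p + (η * g y + φ (S y)) • y - (g (B y) * κ⁻¹) • S y = 0 := by
      linear_combination (norm := module) hXIy
    have hz1 : η * g y + φ (S y) = 0 := by linear_combination hηg
    rw [hz1, zero_smul, add_zero] at ev1
    obtain ⟨b, hb⟩ : ∃ b : ℂ, A p = b • S y := by
      refine ⟨(q y)⁻¹ * (g (B y) * κ⁻¹), ?_⟩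
      have h5 : A p = (q y)⁻¹ • (q y • A p) := by
        rw [smul_smul, inv_mul_cancel₀ hqy0, one_smul]
      have h6 : q y • A p = (g (B y) * κ⁻¹) • S y := by
        linear_combination (norm := module) ev1
      rw [h5, h6, smul_smul]
    have hb0 : b ≠ 0 := by
      intro h; rw [h, zero_smul] at hb; exact hAp0 hb
    have hbqs : b * q (S y) = -(φ (S y)) := by
      rw [← hqAp, hb, map_smul, smul_eq_mul]
    have hqs0 : q (S y) ≠ 0 := by
      intro h; rw [h, mul_zero] at hbqs; exact hc (by linear_combination hbqs)
    -- Step 2 : (ρ c) • p = ...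
    have hBSy : B (S y) = (κ * η) • y := by rw [hκ, map_smul, hη, smul_smul]
    have hgBSy : g (B (S y)) = -(κ * φ (S y)) := by
      rw [hBSy, map_smul, smul_eq_mul]
      linear_combination κ * hηg
    have hXIs := hXI (S y)
    rw [hqA (S y), hgSy, hb, hgBSy, hνq (S y), hu_eq] at hXIs
    have ev2 : (ρ * φ (S y)) • p = (ν * q (S y)) • y + ((b * q (S y)) + (κ * φ (S y) * κ⁻¹ - φ (S y))) • S y := by
      linear_combination (norm := module) -hXIs
    have hz2 : (b * q (S y)) + (κ * φ (S y) * κ⁻¹ - φ (S y)) = -(φ (S y)) := by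
      have h5 : κ * φ (S y) * κ⁻¹ - φ (S y) = 0 := by field_simp; ring
      rw [h5, add_zero, hbqs]
    rw [hz2] at ev2
    have hρc0 : ρ * φ (S y) ≠ 0 := mul_ne_zero hρ0 hc
    -- Step 3 : g ∘ B = (κ b) q
    have hφXI : ∀ x, q x * φ (A p) - q (A x) * φ p + (g x * φ (B u) - g (B x) * φ u)
        = φ x * φ (S y) - φ (S x) * φ y := fun x => by
      have h2 := congrArg φ (hXI x)
      simpa [smul_eq_mul] using h2
    have hφAp : φ (A p) = b * φ (S y) := by rw [hb, map_smul, smul_eq_mul]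
    have hφBu : φ (B u) = 0 := by rw [hη, map_smul, h0, smul_zero]
    have hgBx : ∀ x, g (B x) = (κ * b) * q x := by
      intro x
      have h7 := hφXI x
      rw [hφAp, hqA x, hφBu, h0, mul_zero] at h7
      have h8 : φ (S y) * g (B x) = φ (S y) * ((κ * b) * q x) := by
        linear_combination (-κ) * h7 - (κ * φ x) * hρφp - g (B x) * hφu
      exact mul_left_cancel₀ hc h8
    -- Step 5 : F'' operator, with ψ = b • q + φ kept opaque
    obtain ⟨ψ, hψeq⟩ : ∃ ψ : X →L[ℂ] ℂ, ψ = b • q + φ := ⟨_, rfl⟩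
    have hψx : ∀ x, ψ x = b * q x + φ x := fun x => by
      rw [hψeq]; simp [smul_eq_mul]
    have hψy : ψ y = b * q y := by rw [hψx, h0, add_zero]
    have hψ0 : ψ ≠ 0 := by
      intro h
      have h5 : ψ y = 0 := by rw [h]; simp
      rw [hψy] at h5
      exact (mul_ne_zero hb0 hqy0) h5
    have hgcB : g.comp B = (κ * b) • q := by
      ext x; simpa [smul_eq_mul] using hgBx x
    have hF'' : A*(S*B) - (S*B)*A = ψ.smulRight (S y) := by
      have e : A*(S*B) - (S*B)*A = (A*S - S*A)*B + S*(A*B - B*A) := by noncomm_ring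
      rw [e, hM, hF, srm, msr, hgcB, sr_smul_left]
      have h9 : (κ * b) • u = b • S y := by rw [hκ, smul_smul, mul_comm]
      rw [h9, ← sr_smul_left, ← sr_add_left, ← hψeq]
    -- Step 4 : S (B y)
    have hSBy : S (B y) = (κ * η) • y + q y • p := by
      have h10 := congrArg (fun T : X →L[ℂ] X => T y) hN
      simp only [ContinuousLinearMap.sub_apply, ContinuousLinearMap.mul_apply,
        ContinuousLinearMap.smulRight_apply] at h10
      rw [hBSy] at h10
      linear_combination (norm := module) h10
    have hφSBy : φ (S (B y)) = q y * φ p := by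
      rw [hSBy, map_add, map_smul, map_smul, h0, smul_zero, smul_eq_mul, zero_add]
    -- Step 6 : R1-star
    have idC1 : A*((S*B)*B) - ((S*B)*B)*A
        = (ψ.comp B).smulRight (S y) + φ.smulRight (S (B y)) := by
      have e : A*((S*B)*B) - ((S*B)*B)*A = (A*(S*B) - (S*B)*A)*B + (S*B)*(A*B - B*A) := by
        noncomm_ring
      rw [e, hF'', hF, srm, msr]
      rfl
    have hR1 : ψ (B (S y)) + φ (S (B y)) = 0 := by
      obtain ⟨ψ₃, w₃, hw₃⟩ := exists_rep _ (hrank A hA ((S*B)*B) (hmul (S*B) (hmul S hS B hB) B hB))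
      have t1 : ψ₃ w₃ = 0 := trace_zero 𝒮 hmul hrank hA (hmul (S*B) (hmul S hS B hB) B hB) hw₃
      have t2 := tr3 (idC1.symm.trans hw₃)
      rw [t1] at t2
      simpa [ContinuousLinearMap.comp_apply] using t2
    have hR1' : κ * η * (b * q y) + q y * φ p = 0 := by
      have h11 : ψ (B (S y)) = κ * η * (b * q y) := by
        rw [hBSy, map_smul, hψy, smul_eq_mul]
      rw [h11, hφSBy] at hR1
      exact hR1
    -- Step 8 : the functional q ∘ B ∘ A
    have hKop : B*(S*B) - (S*B)*B = -((q.comp B).smulRight p) := by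
      have e : B*(S*B) - (S*B)*B = -((S*B - B*S)*B) := by noncomm_ring
      rw [e, hN, srm]
    have hcompBA : ((q.comp B).smulRight p) * A = (q.comp (B*A)).smulRight p := by
      ext x; simp [ContinuousLinearMap.mul_apply]
    have idC2 : (B*A)*(S*B) - (S*B)*(B*A)
        = (-(q.comp (B*A))).smulRight p + ((κ * η) • ψ).smulRight y := by
      have e : (B*A)*(S*B) - (S*B)*(B*A)
          = B*(A*(S*B) - (S*B)*A) + (B*(S*B) - (S*B)*B)*A := by noncomm_ring
      rw [e, hF'', hKop, msr, hBSy, neg_mul, hcompBA, ← sr_smul_left, sr_neg_left, add_comm]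
    have hf2 : (κ * η) • ψ ≠ 0 := smul_ne_zero (mul_ne_zero hκ0 hη0) hψ0
    have d11 := dich (hrank (B*A) (hmul B hB A hA) (S*B) (hmul S hS B hB)) idC2 hp0 hf2
    rcases d11 with ⟨k, hk⟩ | ⟨k, hk⟩
    · -- y = k • p : contradiction via ev2
      have h12 : (ρ * φ (S y)) • y = k • ((ρ * φ (S y)) • p) := by
        rw [hk, smul_comm]
      rw [ev2] at h12
      have ev3 : (ρ * φ (S y) - k * (ν * q (S y))) • y + (k * φ (S y)) • S y = 0 := by
        linear_combination (norm := module) h12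
      obtain ⟨e1, e2⟩ := ind2 hy0 hns ev3
      have hk0 : k = 0 := by
        rcases mul_eq_zero.mp e2 with h | h
        · exact h
        · exact absurd h hc
      rw [hk0, zero_mul, sub_zero] at e1
      exact hρc0 e1
    · -- q (B (A x)) = ς (ψ x)
      obtain ⟨ς, hς⟩ : ∃ ς : ℂ, ∀ x, q (B (A x)) = ς * ψ x := by
        refine ⟨-(k * (κ * η)), fun x => ?_⟩
        have h2 := congrArg (fun F : X →L[ℂ] ℂ => F x) hk
        simp only [ContinuousLinearMap.neg_apply, ContinuousLinearMap.comp_apply,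
          ContinuousLinearMap.smul_apply, ContinuousLinearMap.mul_apply, smul_eq_mul] at h2
        linear_combination -h2
      -- Step 9 : second Jacobi identity evaluated at y
      have hF''n : (S*B)*A - A*(S*B) = -(ψ.smulRight (S y)) := by
        rw [← neg_sub, hF'']
      have jac2 : A*(B*(S*B) - (S*B)*B) - (B*(S*B) - (S*B)*B)*A
          + (B*((S*B)*A - A*(S*B)) - ((S*B)*A - A*(S*B))*B)
          + ((S*B)*(A*B - B*A) - (A*B - B*A)*(S*B)) = 0 := by noncomm_ring
      rw [hKop, hF''n, hF] at jac2
      have hJy := congrArg (fun T : X →L[ℂ] X => T y) jac2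
      simp only [ContinuousLinearMap.add_apply, ContinuousLinearMap.sub_apply,
        ContinuousLinearMap.mul_apply, ContinuousLinearMap.neg_apply,
        ContinuousLinearMap.smulRight_apply, ContinuousLinearMap.comp_apply,
        ContinuousLinearMap.zero_apply, map_neg, map_smul] at hJy
      -- substitute values
      rw [hb, hς y, hψy, hBSy, h0, hφSBy] at hJy
      -- hJy is now a vector identity in y, S y, p.  Multiply by (ρ φ(Sy)) and use ev2.
      have ev4 : (ς * (b * q y) * (ν * q (S y)) - (ρ * φ (S y)) * (κ * η * (b * q y)) - (ρ * φ (S y)) * (q y * φ p)) • y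
          + ((ρ * φ (S y)) * (ψ (B y)) - (ρ * φ (S y)) * (q (B y) * b) - ς * (b * q y) * φ (S y)) • S y = 0 := by
        linear_combination (norm := module) (ρ * φ (S y)) • hJy - (ς * (b * q y)) • ev2
      obtain ⟨e1, _⟩ := ind2 hy0 hns ev4
      -- use hR1' : κ η (b q y) + q y φ p = 0
      have hςz : ς * (b * q y) * (ν * q (S y)) = 0 := by
        linear_combination e1 + (ρ * φ (S y)) * hR1'
      have hς0 : ς = 0 := by
        rcases mul_eq_zero.mp hςz with h | h
        · rcases mul_eq_zero.mp h with h' | h'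
          · exact h'
          · exact absurd h' (mul_ne_zero hb0 hqy0)
        · exact absurd h (mul_ne_zero hν0 hqs0)
      have h13 : q (B (A p)) = 0 := by rw [hς p, hς0, zero_mul]
      have h14 : q (B (A p)) = b * (κ * η * q y) := by
        simp only [hb, map_smul, hBSy, smul_smul, smul_eq_mul]
        ring
      rw [h14] at h13
      rcases mul_eq_zero.mp h13 with h | h
      · exact hb0 h
      · rcases mul_eq_zero.mp h with h' | h'
        · rcases mul_eq_zero.mp h' with h'' | h''
          · exact hκ0 h''
          · exact hη0 h''
        · exact hqy0 h'
  -- Case C-c : φ.comp S = μ • g, A p = ζ • y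
  · have hμg : ∀ x, φ (S x) = μ * g x := fun x => by
      have h2 := congrArg (fun F : X →L[ℂ] ℂ => F x) hμ
      simpa using h2
    have hgy0 : g y ≠ 0 := by
      intro h; apply hc; rw [hμg y, h, mul_zero]
    have hζq : ζ * q y = -(φ (S y)) := by
      rw [← hqAp, hζ, map_smul, smul_eq_mul]
    have hXIy := hXI y
    rw [hqAy, h0, hζ] at hXIy
    have ev : g y • B u = (-(φ (S y)) - ζ * q y) • y + g (B y) • u := by
      linear_combination (norm := module) hXIy
    have hz : -(φ (S y)) - ζ * q y = 0 := by linear_combination -hζq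
    rw [hz, zero_smul, zero_add] at ev
    have ev2 := congrArg g ev
    simp only [map_smul, smul_eq_mul, hgu, mul_zero] at ev2
    rw [hgBu] at ev2
    rcases mul_eq_zero.mp ev2 with h | h
    · exact hgy0 h
    · exact hc (by linear_combination -h)
  -- Case C-d : φ.comp S = μ • g = ν • q
  · have hμg : ∀ x, φ (S x) = μ * g x := fun x => by
      have h2 := congrArg (fun F : X →L[ℂ] ℂ => F x) hμ
      simpa using h2
    have hνq : ∀ x, φ (S x) = ν * q x := fun x => by
      have h2 := congrArg (fun F : X →L[ℂ] ℂ => F x) hν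
      simpa using h2
    have hgy0 : g y ≠ 0 := by
      intro h; apply hc; rw [hμg y, h, mul_zero]
    have hqy0 : q y ≠ 0 := by
      intro h; apply hc; rw [hνq y, h, mul_zero]
    have hν0 : ν ≠ 0 := by
      intro h; apply hc; rw [hνq y, h, zero_mul]
    have hXIy := hXI y
    rw [hqAy, h0] at hXIy
    have ev := congrArg g hXIy
    simp only [map_sub, map_add, map_smul, smul_eq_mul, hgSy, hgu, mul_zero, zero_mul,
      sub_zero, zero_sub, zero_add, add_zero] at ev
    rw [hgBu] at ev
    have hgAp : g (A p) = 0 := by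
      have h5 : q y * g (A p) = 0 := by linear_combination ev
      rcases mul_eq_zero.mp h5 with h | h
      · exact absurd h hqy0
      · exact h
    have h6 : ν * q (A p) = μ * g (A p) := by
      linear_combination (hμg (A p)) - (hνq (A p))
    rw [hgAp, mul_zero, hqAp] at h6
    rcases mul_eq_zero.mp h6 with h | h
    · exact hν0 h
    · exact hc (by linear_combination -h)

set_option maxHeartbeats 2000000 in
lemma key (𝒮 : Set (X →L[ℂ] X))
    (hmul : ∀ S ∈ 𝒮, ∀ T ∈ 𝒮, S * T ∈ 𝒮)
    (hrank : ∀ S ∈ 𝒮, ∀ T ∈ 𝒮, LinearMap.rank ((S * T - T * S : X →L[ℂ] X) : X →ₗ[ℂ] X) ≤ 1)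
    {A B S : X →L[ℂ] X} {y : X} {φ : X →L[ℂ] ℂ}
    (hA : A ∈ 𝒮) (hB : B ∈ 𝒮) (hS : S ∈ 𝒮)
    (hF : A*B - B*A = φ.smulRight y) : φ (S y) = 0 := by
  by_contra hc
  obtain ⟨g, u, hM⟩ := exists_rep _ (hrank A hA S hS)
  obtain ⟨q, p, hN⟩ := exists_rep _ (hrank S hS B hB)
  have h0 : φ y = 0 := trace_zero 𝒮 hmul hrank hA hB hF
  have hgu : g u = 0 := trace_zero 𝒮 hmul hrank hA hS hM
  have hqp : q p = 0 := trace_zero 𝒮 hmul hrank hS hB hN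
  have idBS : A*(B*S) - (B*S)*A = (φ.comp S).smulRight y + g.smulRight (B u) := by
    have e : A*(B*S) - (B*S)*A = (A*B - B*A)*S + B*(A*S - S*A) := by noncomm_ring
    rw [e, hF, hM, srm, msr]
  have hgBu : g (B u) = -(φ (S y)) := by
    obtain ⟨ψ₁, w₁, hw₁⟩ := exists_rep _ (hrank A hA (B*S) (hmul B hB S hS))
    have t1 : ψ₁ w₁ = 0 := trace_zero 𝒮 hmul hrank hA (hmul B hB S hS) hw₁
    have t2 := tr3 (idBS.symm.trans hw₁)
    rw [t1] at t2
    simp only [ContinuousLinearMap.comp_apply] at t2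
    linear_combination t2
  have idSA : (S*A)*B - B*(S*A) = (q.comp A).smulRight p + φ.smulRight (S y) := by
    have e : (S*A)*B - B*(S*A) = S*(A*B - B*A) + (S*B - B*S)*A := by noncomm_ring
    rw [e, hF, hN, msr, srm, add_comm]
  have hqAp : q (A p) = -(φ (S y)) := by
    obtain ⟨ψ₁, w₁, hw₁⟩ := exists_rep _ (hrank (S*A) (hmul S hS A hA) B hB)
    have t1 : ψ₁ w₁ = 0 := trace_zero 𝒮 hmul hrank (hmul S hS A hA) hB hw₁
    have t2 := tr3 (idSA.symm.trans hw₁)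
    rw [t1] at t2
    simp only [ContinuousLinearMap.comp_apply] at t2
    linear_combination t2
  have hy0 : y ≠ 0 := by
    intro h; apply hc; rw [h, map_zero, map_zero]
  have hSy0 : S y ≠ 0 := by
    intro h; apply hc; rw [h, map_zero]
  have hφ0 : φ ≠ 0 := by
    intro h; apply hc; rw [h]; simp
  have hu0 : u ≠ 0 := by
    intro h; apply hc
    have h2 := hgBu; rw [h, map_zero, map_zero] at h2
    linear_combination h2
  have hg0 : g ≠ 0 := by
    intro h; apply hc
    have h2 := hgBu; rw [h] at h2
    simp only [ContinuousLinearMap.zero_apply] at h2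
    linear_combination h2
  have hp0 : p ≠ 0 := by
    intro h; apply hc
    have h2 := hqAp; rw [h, map_zero, map_zero] at h2
    linear_combination h2
  have hq0 : q ≠ 0 := by
    intro h; apply hc
    have h2 := hqAp; rw [h] at h2
    simp only [ContinuousLinearMap.zero_apply] at h2
    linear_combination h2
  have hBu0 : B u ≠ 0 := by
    intro h; apply hc
    have h2 := hgBu; rw [h, map_zero] at h2
    linear_combination h2
  have hAp0 : A p ≠ 0 := by
    intro h; apply hc
    have h2 := hqAp; rw [h, map_zero] at h2
    linear_combination h2
  have hns : ¬ ∃ k : ℂ, S y = k • y := by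
    rintro ⟨k, hk⟩; apply hc; rw [hk, map_smul, h0, smul_zero]
  have hXIop : q.smulRight (A p) - (q.comp A).smulRight p + (g.smulRight (B u) - (g.comp B).smulRight u)
      = φ.smulRight (S y) - (φ.comp S).smulRight y := by
    have e : A*(q.smulRight p) - (q.smulRight p)*A + (B*(g.smulRight u) - (g.smulRight u)*B)
        = S*(φ.smulRight y) - (φ.smulRight y)*S := by
      rw [← hF, ← hM, ← hN]; noncomm_ring
    rw [msr, srm, msr, srm, msr, srm] at e
    exact e
  have hXI : ∀ x : X, q x • A p - q (A x) • p + (g x • B u - g (B x) • u)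
      = φ x • S y - φ (S x) • y := fun x => by
    have h2 := congrArg (fun T : X →L[ℂ] X => T x) hXIop
    simpa using h2
  have idAS : (A*S)*B - B*(A*S) = (φ.comp S).smulRight y + q.smulRight (A p) := by
    have e : (A*S)*B - B*(A*S) = A*(S*B - B*S) + (A*B - B*A)*S := by noncomm_ring
    rw [e, hN, hF, msr, srm, add_comm]
  have idSB : A*(S*B) - (S*B)*A = (g.comp B).smulRight u + φ.smulRight (S y) := by
    have e : A*(S*B) - (S*B)*A = (A*S - S*A)*B + S*(A*B - B*A) := by noncomm_ring
    rw [e, hM, hF, srm, msr]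
  have d7 := dich (hrank A hA (S*B) (hmul S hS B hB)) idSB hu0 hφ0
  have d9 := dich (hrank (S*A) (hmul S hS A hA) B hB) idSA hp0 hφ0
  rcases d7 with hD1 | ⟨lam, hlam⟩
  · rcases d9 with ⟨kk, hkk⟩ | hD3'
    · -- CASE B : S y = κ • u and S y = kk • p
      obtain ⟨κ, hκ⟩ := hD1
      have hκ0 : κ ≠ 0 := by rintro rfl; rw [zero_smul] at hκ; exact hSy0 hκ
      have hkk0 : kk ≠ 0 := by rintro rfl; rw [zero_smul] at hkk; exact hSy0 hkk
      have hu_eq : u = κ⁻¹ • S y := by rw [hκ, smul_smul, inv_mul_cancel₀ hκ0, one_smul]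
      have hp_eq : p = kk⁻¹ • S y := by rw [hkk, smul_smul, inv_mul_cancel₀ hkk0, one_smul]
      have hgSy : g (S y) = 0 := by rw [hκ, map_smul, hgu, smul_zero]
      have hqSy : q (S y) = 0 := by rw [hkk, map_smul, hqp, smul_zero]
      have hgp : g p = 0 := by rw [hp_eq, map_smul, hgSy, smul_zero]
      have hqu : q u = 0 := by rw [hu_eq, map_smul, hqSy, smul_zero]
      have d8 := dich (hrank A hA (B*S) (hmul B hB S hS)) idBS hy0 hg0
      have d10 := dich (hrank (A*S) (hmul A hA S hS) B hB) idAS hy0 hq0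
      have hXIy := hXI y
      rw [h0] at hXIy
      rcases d8 with ⟨η, hη⟩ | ⟨μ, hμ⟩ <;> rcases d10 with ⟨ζ, hζ⟩ | ⟨ν, hν⟩
      · -- B-a
        have hζq : ζ * q y = -(φ (S y)) := by rw [← hqAp, hζ, map_smul, smul_eq_mul]
        have hηg : η * g y = -(φ (S y)) := by rw [← hgBu, hη, map_smul, smul_eq_mul]
        rw [hζ, hη, hu_eq, hp_eq] at hXIy
        have ev : (ζ * q y + η * g y + φ (S y)) • y + (-(q (A y) * kk⁻¹) - g (B y) * κ⁻¹) • S y = 0 := by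
          linear_combination (norm := module) hXIy
        obtain ⟨e1, _⟩ := ind2 hy0 hns ev
        exact hc (by linear_combination hζq + hηg - e1)
      · -- B-b : B u = η • y, φ∘S = ν • q
        have hηg : η * g y = -(φ (S y)) := by rw [← hgBu, hη, map_smul, smul_eq_mul]
        have hνq : ∀ x, φ (S x) = ν * q x := fun x => by
          have h2 := congrArg (fun F : X →L[ℂ] ℂ => F x) hν
          simpa using h2
        have hqy0 : q y ≠ 0 := by
          intro h; apply hc; rw [hνq y, h, mul_zero]
        rw [hη] at hXIy
        have ev : q y • A p = q (A y) • p + g (B y) • u + (-(φ (S y)) - η * g y) • y := by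
          linear_combination (norm := module) hXIy
        have hz : -(φ (S y)) - η * g y = 0 := by linear_combination -hηg
        rw [hz, zero_smul, add_zero] at ev
        have ev2 := congrArg q ev
        simp only [map_add, map_smul, smul_eq_mul, hqp, hqu, mul_zero, add_zero, zero_add] at ev2
        rw [hqAp] at ev2
        rcases mul_eq_zero.mp ev2 with h | h
        · exact hqy0 h
        · exact hc (by linear_combination -h)
      · -- B-c : φ∘S = μ • g, A p = ζ • y
        have hζq : ζ * q y = -(φ (S y)) := by rw [← hqAp, hζ, map_smul, smul_eq_mul]
        have hμg : ∀ x, φ (S x) = μ * g x := fun x => by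
          have h2 := congrArg (fun F : X →L[ℂ] ℂ => F x) hμ
          simpa using h2
        have hgy0 : g y ≠ 0 := by
          intro h; apply hc; rw [hμg y, h, mul_zero]
        rw [hζ] at hXIy
        have ev : g y • B u = q (A y) • p + g (B y) • u + (-(φ (S y)) - ζ * q y) • y := by
          linear_combination (norm := module) hXIy
        have hz : -(φ (S y)) - ζ * q y = 0 := by linear_combination -hζq
        rw [hz, zero_smul, add_zero] at ev
        have ev2 := congrArg g ev
        simp only [map_add, map_smul, smul_eq_mul, hgp, hgu, mul_zero, add_zero, zero_add] at ev2
        rw [hgBu] at ev2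
        rcases mul_eq_zero.mp ev2 with h | h
        · exact hgy0 h
        · exact hc (by linear_combination -h)
      · -- B-d : φ∘S = μ • g = ν • q
        have hμg : ∀ x, φ (S x) = μ * g x := fun x => by
          have h2 := congrArg (fun F : X →L[ℂ] ℂ => F x) hμ
          simpa using h2
        have hνq : ∀ x, φ (S x) = ν * q x := fun x => by
          have h2 := congrArg (fun F : X →L[ℂ] ℂ => F x) hν
          simpa using h2
        have hgy0 : g y ≠ 0 := by
          intro h; apply hc; rw [hμg y, h, mul_zero]
        have hqy0 : q y ≠ 0 := by
          intro h; apply hc; rw [hνq y, h, mul_zero]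
        have hν0 : ν ≠ 0 := by
          intro h; apply hc; rw [hνq y, h, zero_mul]
        have ev := congrArg g hXIy
        simp only [map_sub, map_add, map_smul, smul_eq_mul, hgSy, hgu, hgp, mul_zero, zero_mul,
          sub_zero, zero_sub, zero_add, add_zero] at ev
        rw [hgBu] at ev
        have hgAp : g (A p) = 0 := by
          have h5 : q y * g (A p) = 0 := by linear_combination ev
          rcases mul_eq_zero.mp h5 with h | h
          · exact absurd h hqy0
          · exact h
        have h6 : ν * q (A p) = μ * g (A p) := by
          linear_combination (hμg (A p)) - (hνq (A p))
        rw [hgAp, mul_zero, hqAp] at h6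
        rcases mul_eq_zero.mp h6 with h | h
        · exact hν0 h
        · exact hc (by linear_combination -h)
    · exact caseC 𝒮 hmul hrank hA hB hS hF hM hN hc hD1 hD3'
  · rcases d9 with ⟨kk, hkk⟩ | ⟨ρ, hρ⟩
    · -- CASE D : swap A and B and apply caseC
      have hF' : B*A - A*B = (-φ).smulRight y := by
        rw [sr_neg_left, ← hF]; noncomm_ring
      have hM' : B*S - S*B = (-q).smulRight p := by
        rw [sr_neg_left, ← hN]; noncomm_ring
      have hN' : S*A - A*S = (-g).smulRight u := by
        rw [sr_neg_left, ← hM]; noncomm_ring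
      have hc' : (-φ) (S y) ≠ 0 := by
        simp only [ContinuousLinearMap.neg_apply, ne_eq, neg_eq_zero]; exact hc
      have hρ' : ∃ ρ : ℂ, (-g).comp B = ρ • (-φ) := by
        refine ⟨lam, ?_⟩
        ext x
        have h2 := congrArg (fun F : X →L[ℂ] ℂ => F x) hlam
        simp only [ContinuousLinearMap.comp_apply, ContinuousLinearMap.smul_apply,
          ContinuousLinearMap.neg_apply, smul_eq_mul] at h2 ⊢
        linear_combination -h2
      exact caseC 𝒮 hmul hrank hB hA hS hF' hM' hN' hc' ⟨kk, hkk⟩ hρ'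
    · -- CASE A : g∘B = lam • φ, q∘A = ρ • φ
      have hgB : ∀ x, g (B x) = lam * φ x := fun x => by
        have h2 := congrArg (fun F : X →L[ℂ] ℂ => F x) hlam
        simpa using h2
      have hqA : ∀ x, q (A x) = ρ * φ x := fun x => by
        have h2 := congrArg (fun F : X →L[ℂ] ℂ => F x) hρ
        simpa using h2
      have hlamu : lam * φ u = -(φ (S y)) := by rw [← hgB u]; exact hgBu
      have hρφp : ρ * φ p = -(φ (S y)) := by rw [← hqA p]; exact hqAp
      have hqAy : q (A y) = 0 := by rw [hqA, h0, mul_zero]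
      have hgBy : g (B y) = 0 := by rw [hgB, h0, mul_zero]
      have d8 := dich (hrank A hA (B*S) (hmul B hB S hS)) idBS hy0 hg0
      have d10 := dich (hrank (A*S) (hmul A hA S hS) B hB) idAS hy0 hq0
      have hXIy := hXI y
      rw [hqAy, hgBy, h0] at hXIy
      have ev0 : q y • A p + g y • B u + φ (S y) • y = 0 := by
        linear_combination (norm := module) hXIy
      rcases d8 with ⟨η, hη⟩ | ⟨μ, hμ⟩ <;> rcases d10 with ⟨ζ, hζ⟩ | ⟨ν, hν⟩
      · -- A-a
        have hζq : ζ * q y = -(φ (S y)) := by rw [← hqAp, hζ, map_smul, smul_eq_mul]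
        have hηg : η * g y = -(φ (S y)) := by rw [← hgBu, hη, map_smul, smul_eq_mul]
        rw [hζ, hη] at ev0
        have ev1 : (ζ * q y + η * g y + φ (S y)) • y = 0 := by
          linear_combination (norm := module) ev0
        rcases smul_eq_zero.mp ev1 with h | h
        · exact hc (by linear_combination hζq + hηg - h)
        · exact hy0 h
      · -- A-b
        have hηg : η * g y = -(φ (S y)) := by rw [← hgBu, hη, map_smul, smul_eq_mul]
        have hνq : ∀ x, φ (S x) = ν * q x := fun x => by
          have h2 := congrArg (fun F : X →L[ℂ] ℂ => F x) hν
          simpa using h2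
        have hqy0 : q y ≠ 0 := by
          intro h; apply hc; rw [hνq y, h, mul_zero]
        rw [hη] at ev0
        have ev1 : q y • A p + (η * g y + φ (S y)) • y = 0 := by
          linear_combination (norm := module) ev0
        have hz : η * g y + φ (S y) = 0 := by linear_combination hηg
        rw [hz, zero_smul, add_zero] at ev1
        rcases smul_eq_zero.mp ev1 with h | h
        · exact hqy0 h
        · exact hAp0 h
      · -- A-c
        have hζq : ζ * q y = -(φ (S y)) := by rw [← hqAp, hζ, map_smul, smul_eq_mul]
        have hμg : ∀ x, φ (S x) = μ * g x := fun x => by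
          have h2 := congrArg (fun F : X →L[ℂ] ℂ => F x) hμ
          simpa using h2
        have hgy0 : g y ≠ 0 := by
          intro h; apply hc; rw [hμg y, h, mul_zero]
        rw [hζ] at ev0
        have ev1 : g y • B u + (ζ * q y + φ (S y)) • y = 0 := by
          linear_combination (norm := module) ev0
        have hz : ζ * q y + φ (S y) = 0 := by linear_combination hζq
        rw [hz, zero_smul, add_zero] at ev1
        rcases smul_eq_zero.mp ev1 with h | h
        · exact hgy0 h
        · exact hBu0 h
      · -- A-d
        have hμg : ∀ x, φ (S x) = μ * g x := fun x => by
          have h2 := congrArg (fun F : X →L[ℂ] ℂ => F x) hμ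
          simpa using h2
        have hνq : ∀ x, φ (S x) = ν * q x := fun x => by
          have h2 := congrArg (fun F : X →L[ℂ] ℂ => F x) hν
          simpa using h2
        have hgy0 : g y ≠ 0 := by
          intro h; apply hc; rw [hμg y, h, mul_zero]
        have hν0 : ν ≠ 0 := by
          intro h; apply hc; rw [hνq y, h, zero_mul]
        have hWV : ∀ x, g x • ((μ • A p + ν • B u) + (ν * μ) • y)
            = φ x • ((ν • S y + (ν * ρ) • p) + (ν * lam) • u) := by
          intro x
          have h1 := hXI x
          rw [hqA x, hgB x, hμg x] at h1
          have h2 : ν * q x = μ * g x := by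
            linear_combination (hμg x) - (hνq x)
          linear_combination (norm := module) ν • h1 - h2 • A p
        have hWy := hWV y
        rw [h0, zero_smul] at hWy
        have hW0 : (μ • A p + ν • B u) + (ν * μ) • y = 0 := by
          rcases smul_eq_zero.mp hWy with h | h
          · exact absurd h hgy0
          · exact h
        have hV0 : (ν • S y + (ν * ρ) • p) + (ν * lam) • u = 0 := by
          have h4 := hWV (S y)
          rw [hW0, smul_zero] at h4
          rcases smul_eq_zero.mp h4.symm with h | h
          · exact absurd h hc
          · exact h
        have h5 := congrArg φ hV0
        simp only [map_add, map_smul, smul_eq_mul, map_zero] at h5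
        have h6 : ν * φ (S y) = 0 := by
          linear_combination ν * hρφp + ν * hlamu - h5
        rcases mul_eq_zero.mp h6 with h | h
        · exact hν0 h
        · exact hc h

end RankOneComm


theorem stmt_10 {X : Type*} [NormedAddCommGroup X] [NormedSpace ℂ X] [CompleteSpace X]
    (hdim : 2 ≤ Module.rank ℂ X)
    (𝒮 : Set (X →L[ℂ] X)) (hmul : ∀ S ∈ 𝒮, ∀ T ∈ 𝒮, S * T ∈ 𝒮)
    (hrank : ∀ S ∈ 𝒮, ∀ T ∈ 𝒮, LinearMap.rank ((S * T - T * S : X →L[ℂ] X) : X →ₗ[ℂ] X) ≤ 1)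
    (hnc : ∃ S ∈ 𝒮, ∃ T ∈ 𝒮, S * T ≠ T * S)
    (A B : X →L[ℂ] X) (hA : A ∈ 𝒮) (hB : B ∈ 𝒮)
    (y : X) (φ : X →L[ℂ] ℂ) (hy : y ≠ 0) (hφ : φ ≠ 0)
    (hAB : A * B - B * A = φ.smulRight y) :
    (Submodule.span ℂ (insert y {x | ∃ S ∈ 𝒮, x = S y})).topologicalClosure ≠ ⊥ ∧
    (∀ T ∈ 𝒮, ∀ x ∈ (Submodule.span ℂ (insert y {x | ∃ S ∈ 𝒮, x = S y})).topologicalClosure,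
        T x ∈ (Submodule.span ℂ (insert y {x | ∃ S ∈ 𝒮, x = S y})).topologicalClosure) ∧
    (Submodule.span ℂ (insert y {x | ∃ S ∈ 𝒮, x = S y})).topologicalClosure ≤ LinearMap.ker (φ : X →ₗ[ℂ] ℂ) ∧
    (Submodule.span ℂ (insert y {x | ∃ S ∈ 𝒮, x = S y})).topologicalClosure ≠ ⊤ := by
  classical
  set gens : Set X := insert y {x | ∃ S ∈ 𝒮, x = S y} with hgens
  set W : Submodule ℂ X := Submodule.span ℂ gens with hWdef
  have hyW : y ∈ W.topologicalClosure :=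
    W.le_topologicalClosure (Submodule.subset_span (Set.mem_insert _ _))
  have hker : ∀ z ∈ gens, φ z = 0 := by
    intro z hz
    rcases Set.mem_insert_iff.mp hz with rfl | hz2
    · exact RankOneComm.trace_zero 𝒮 hmul hrank hA hB hAB
    · obtain ⟨T, hT, rfl⟩ := hz2
      exact RankOneComm.key 𝒮 hmul hrank hA hB hT hAB
  have hsub : W ≤ LinearMap.ker (φ : X →ₗ[ℂ] ℂ) := by
    rw [hWdef]
    exact Submodule.span_le.mpr fun z hz => LinearMap.mem_ker.mpr (hker z hz)
  have hMker : W.topologicalClosure ≤ LinearMap.ker (φ : X →ₗ[ℂ] ℂ) :=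
    W.topologicalClosure_minimal hsub (ContinuousLinearMap.isClosed_ker φ)
  refine ⟨?_, ?_, hMker, ?_⟩
  · intro h
    rw [h] at hyW
    exact hy (by simpa using hyW)
  · intro T hT x hx
    have hmaps : ∀ z ∈ W, T z ∈ W := by
      intro z hz
      induction hz using Submodule.span_induction with
      | mem z hz =>
        rcases Set.mem_insert_iff.mp hz with rfl | hz2
        · exact Submodule.subset_span (Set.mem_insert_iff.mpr (Or.inr ⟨T, hT, rfl⟩))
        · obtain ⟨S₀, hS₀, rfl⟩ := hz2
          refine Submodule.subset_span (Set.mem_insert_iff.mpr (Or.inr ⟨T * S₀, hmul T hT S₀ hS₀, ?_⟩))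
          rw [ContinuousLinearMap.mul_apply]
      | zero => simpa using (W.zero_mem)
      | add a b _ _ ha hb => rw [map_add]; exact W.add_mem ha hb
      | smul a z _ hz => rw [map_smul]; exact W.smul_mem a hz
    have hx' : x ∈ closure (W : Set X) := hx
    have h1 : T x ∈ closure (T '' (W : Set X)) :=
      image_closure_subset_closure_image T.continuous ⟨x, hx', rfl⟩
    have h2 : closure (T '' (W : Set X)) ⊆ closure (W : Set X) := by
      apply closure_mono
      rintro _ ⟨z, hz, rfl⟩
      exact hmaps z hz
    exact h2 h1
  · intro h
    apply hφ
    ext x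
    have hx : x ∈ W.topologicalClosure := by rw [h]; trivial
    simpa using LinearMap.mem_ker.mp (hMker hx)
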